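/- Let G = (V, E) be a finite connected graph, and for distinct v, w ∈ V let E_{v,w} ∈ SL_V(ℤ) be the elementary matrix with 1's on the diagonal and in position (v,w). Let S_G = { E_{v,w}, E_{w,v} : (v,w) ∈ E }. If v, w ∈ V are at distance at most 2^m in G, then E_{v,w} is a product of at most 4^m elements of S_G and their inverses. Consequently every elementary matrix E_{v,w} lies in the ball of radius 4^{⌈log₂ diam(G)⌉} with respect to S_G. -/

import Mathlib

open Matrix

/-- The ball of radius `n` in the word metric with respect to a set `S`. -/
def wordBall {G : Type*} [Group G] (S : Set G) (n : ℕ) : Set G :=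
  {x | ∃ l : List G, l.length ≤ n ∧ (∀ y ∈ l, y ∈ S ∪ S⁻¹) ∧ l.prod = x}

/-- The elementary matrix `E_{v,w}` (1's on the diagonal and in position `(v,w)`)
as an element of `SL_V(ℤ)`. -/
def elemSL {V : Type*} [Fintype V] [DecidableEq V] (v w : V) (h : v ≠ w) :
    SpecialLinearGroup V ℤ :=
  ⟨Matrix.transvection v w 1, Matrix.det_transvection_of_ne v w h 1⟩

section aux

variable {H : Type*} [Group H] {S : Set H}

lemma wordBall_mono {n n' : ℕ} (h : n ≤ n') : wordBall S n ⊆ wordBall S n' := by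
  rintro x ⟨l, hl, hmem, hprod⟩
  exact ⟨l, hl.trans h, hmem, hprod⟩

lemma mem_wordBall_one {x : H} (hx : x ∈ S) : x ∈ wordBall S 1 :=
  ⟨[x], by simp, by simpa using Or.inl hx, by simp⟩

lemma wordBall_mul {x y : H} {n n' : ℕ} (hx : x ∈ wordBall S n) (hy : y ∈ wordBall S n') :
    x * y ∈ wordBall S (n + n') := by
  obtain ⟨l, hl, hm, hp⟩ := hx
  obtain ⟨l', hl', hm', hp'⟩ := hy
  exact ⟨l ++ l', by simpa using Nat.add_le_add hl hl',
    by intro y hy; rcases List.mem_append.1 hy with h | h; exacts [hm y h, hm' y h],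
    by rw [List.prod_append, hp, hp']⟩

lemma wordBall_inv {x : H} {n : ℕ} (hx : x ∈ wordBall S n) : x⁻¹ ∈ wordBall S n := by
  obtain ⟨l, hl, hm, hp⟩ := hx
  refine ⟨(l.map Inv.inv).reverse, by simpa using hl, ?_, ?_⟩
  · intro y hy
    simp only [List.mem_reverse, List.mem_map] at hy
    obtain ⟨z, hz, rfl⟩ := hy
    rcases hm z hz with h | h
    · exact Or.inr (by simpa using h)
    · exact Or.inl (by simpa using h)
  · rw [← List.prod_inv_reverse, hp]

end aux

section graph

variable {V : Type*} {G : SimpleGraph V}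

lemma dist_getVert_left (hconn : G.Connected) {v w : V} (p : G.Walk v w) (k : ℕ) :
    G.dist v (p.getVert k) ≤ k := by
  induction p generalizing k with
  | nil => simp [SimpleGraph.Walk.getVert, SimpleGraph.dist_self]
  | @cons u b w h q ih =>
    cases k with
    | zero => simp [SimpleGraph.Walk.getVert, SimpleGraph.dist_self]
    | succ k =>
      rw [SimpleGraph.Walk.getVert_cons_succ]
      calc G.dist u (q.getVert k) ≤ G.dist u b + G.dist b (q.getVert k) :=
            hconn.dist_triangle
        _ ≤ 1 + k := by
            gcongr
            · simpa using SimpleGraph.dist_le (SimpleGraph.Walk.cons h SimpleGraph.Walk.nil)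
            · exact ih k
        _ = k + 1 := by omega

lemma dist_getVert_right {v w : V} (p : G.Walk v w) (k : ℕ) :
    G.dist (p.getVert k) w ≤ p.length - k := by
  induction p generalizing k with
  | nil => simp [SimpleGraph.Walk.getVert]
  | @cons u b w h q ih =>
    cases k with
    | zero =>
      simpa [SimpleGraph.Walk.getVert] using SimpleGraph.dist_le (SimpleGraph.Walk.cons h q)
    | succ k =>
      rw [SimpleGraph.Walk.getVert_cons_succ]
      simpa [Nat.succ_sub_succ] using ih k

end graph

lemma elemSL_commutator {V : Type*} [Fintype V] [DecidableEq V] (v x w : V)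
    (hvx : v ≠ x) (hxw : x ≠ w) (hvw : v ≠ w) :
    elemSL v w hvw = (elemSL v x hvx)⁻¹ * (elemSL x w hxw)⁻¹ *
      elemSL v x hvx * elemSL x w hxw := by
  have mat : transvection v x (1:ℤ) * transvection x w 1 =
      transvection x w 1 * (transvection v x 1 * transvection v w 1) := by
    simp only [transvection, mul_add, add_mul, one_mul, mul_one,
      single_mul_single_same, single_mul_single_of_ne, hvx, hxw, hvw,
      Ne.symm hvx, Ne.symm hxw, Ne.symm hvw, ne_eq, not_false_iff, mul_zero,
      add_zero, zero_add]
    abel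
  have key : elemSL v x hvx * elemSL x w hxw =
      elemSL x w hxw * (elemSL v x hvx * elemSL v w hvw) := by
    apply Subtype.ext
    exact mat
  rw [mul_assoc, mul_assoc, key, inv_mul_cancel_left, inv_mul_cancel_left]

/-- for a finite connected graph `G` on `V`, with
`S_G = {E_{v,w}, E_{w,v} : (v,w) ∈ E(G)}`: if `v, w` are at distance at most
`2^m` in `G` then `E_{v,w}` is a product of at most `4^m` elements of `S_G` and
their inverses; consequently every `E_{v,w}` lies in the ball of radius
`4^{⌈log₂ diam(G)⌉}` with respect to `S_G`. -/
theorem elementary_matrices_short_words {V : Type*} [Fintype V] [DecidableEq V]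
    (G : SimpleGraph V) (hconn : G.Connected) :
    (∀ (v w : V) (hvw : v ≠ w) (m : ℕ), G.dist v w ≤ 2 ^ m →
      elemSL v w hvw ∈ wordBall
        {x : SpecialLinearGroup V ℤ | ∃ (a b : V) (hab : G.Adj a b),
          x = elemSL a b hab.ne ∨ x = elemSL b a hab.ne'} (4 ^ m)) ∧
    (∀ (v w : V) (hvw : v ≠ w),
      elemSL v w hvw ∈ wordBall
        {x : SpecialLinearGroup V ℤ | ∃ (a b : V) (hab : G.Adj a b),
          x = elemSL a b hab.ne ∨ x = elemSL b a hab.ne'}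
        (4 ^ Nat.clog 2 G.diam)) := by
  set S : Set (SpecialLinearGroup V ℤ) :=
    {x : SpecialLinearGroup V ℤ | ∃ (a b : V) (hab : G.Adj a b),
      x = elemSL a b hab.ne ∨ x = elemSL b a hab.ne'} with hS
  have main : ∀ (m : ℕ) (v w : V) (hvw : v ≠ w), G.dist v w ≤ 2 ^ m →
      elemSL v w hvw ∈ wordBall S (4 ^ m) := by
    intro m
    induction m with
    | zero =>
      intro v w hvw hd
      have hadj : G.Adj v w := by
        have h1 : G.dist v w = 1 := by
          have := (hconn v w).pos_dist_of_ne hvw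
          omega
        exact SimpleGraph.dist_eq_one_iff_adj.mp h1
      exact mem_wordBall_one ⟨v, w, hadj, Or.inl rfl⟩
    | succ m ih =>
      intro v w hvw hd
      rcases le_or_gt (G.dist v w) (2 ^ m) with hle | hlt
      · exact wordBall_mono (Nat.pow_le_pow_right (by norm_num) (Nat.le_succ m))
          (ih v w hvw hle)
      · obtain ⟨p, hp⟩ := hconn.exists_walk_length_eq_dist v w
        obtain ⟨x, hx⟩ : ∃ x, x = p.getVert (2 ^ m) := ⟨_, rfl⟩
        have hdvx : G.dist v x ≤ 2 ^ m := hx ▸ dist_getVert_left hconn p _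
        have hdxw : G.dist x w ≤ 2 ^ m := by
          have h := dist_getVert_right p (2 ^ m)
          rw [hp, ← hx] at h
          have h2 : G.dist v w ≤ 2 ^ (m + 1) := hd
          have h3 : (2:ℕ) ^ (m+1) = 2 ^ m + 2 ^ m := by ring
          omega
        have hxv : x ≠ v := by
          rintro rfl
          exact absurd hdxw (not_le.2 hlt)
        have hxw' : x ≠ w := by
          rintro rfl
          exact absurd hdvx (not_le.2 hlt)
        have h1 := ih v x (Ne.symm hxv) hdvx
        have h2 := ih x w hxw' hdxw
        rw [elemSL_commutator v x w (Ne.symm hxv) hxw' hvw]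
        have : (4 : ℕ) ^ (m + 1) = 4 ^ m + 4 ^ m + 4 ^ m + 4 ^ m := by ring
        rw [this]
        exact wordBall_mul (wordBall_mul (wordBall_mul
          (wordBall_inv h1) (wordBall_inv h2)) h1) h2
  refine ⟨fun v w hvw m hm => main m v w hvw hm, ?_⟩
  intro v w hvw
  apply main _ _ _ hvw
  have htop : G.ediam ≠ ⊤ := by
    have : Nonempty V := hconn.nonempty
    obtain ⟨u1, u2, h12⟩ := SimpleGraph.exists_edist_eq_ediam_of_finite (G := G)
    rw [← h12]
    exact SimpleGraph.edist_ne_top_iff_reachable.2 (hconn u1 u2)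
  calc G.dist v w ≤ G.diam := SimpleGraph.dist_le_diam htop
    _ ≤ 2 ^ Nat.clog 2 G.diam := Nat.le_pow_clog (by norm_num) _
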